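/- Let F be a field and n ≥ 3. There are constants c_n > 0 and C_n, depending only on n, with the following property: let 𝔏 be a generic finite collection of lines in F^n, let λ ≥ 1, and let J_λ(𝔏) = {x ∈ F^n : N(x) ≥ λ}. Then there exists an assignment giving to each x ∈ J_λ(𝔏) a set S(x) ⊆ 𝔏 of lines, each containing x, with |S(x)| ≥ c_n · λ^{1/n}, such that for every line l ∈ 𝔏, the number of points x ∈ J_λ(𝔏) with l ∈ S(x) is at most C_n · |J_λ(𝔏)|^{1/n}. -/

import Mathlib

/-- A line in `F^n`: a set of the form `{v + t • b : t ∈ F}` with `b ≠ 0`. -/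
def IsLine (F : Type*) [Field F] {n : ℕ} (l : Set (Fin n → F)) : Prop :=
  ∃ v b : Fin n → F, b ≠ 0 ∧ l = {x | ∃ t : F, x = v + t • b}

/-- `b` is a direction of the line `l`. -/
def IsDirection (F : Type*) [Field F] {n : ℕ} (b : Fin n → F) (l : Set (Fin n → F)) : Prop :=
  b ≠ 0 ∧ ∃ v : Fin n → F, l = {x | ∃ t : F, x = v + t • b}

/-- The lines `l 0, …, l (n-1)` form a joint at `x`: each passes through `x` and
their directions span `F^n`. -/
def FormsJoint (F : Type*) [Field F] {n : ℕ} (l : Fin n → Set (Fin n → F))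
    (x : Fin n → F) : Prop :=
  (∀ i, x ∈ l i) ∧ ∃ b : Fin n → Fin n → F,
    (∀ i, IsDirection F (b i) (l i)) ∧ Submodule.span F (Set.range b) = ⊤

/-- `x` is a joint of the collection `𝔏`: there are (at least) `n` distinct lines of `𝔏`
through `x` whose directions span `F^n`. -/
def IsJoint (F : Type*) [Field F] {n : ℕ} (𝔏 : Set (Set (Fin n → F)))
    (x : Fin n → F) : Prop :=
  ∃ l : Fin n → Set (Fin n → F), Function.Injective l ∧ (∀ i, l i ∈ 𝔏) ∧ FormsJoint F l x

/-- The multiplicity `N(x)`: the number of `n`-tuples of lines of `𝔏` forming a joint at `x`. -/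
noncomputable def jointMult (F : Type*) [Field F] {n : ℕ} (𝔏 : Set (Set (Fin n → F)))
    (x : Fin n → F) : ℕ :=
  Set.ncard {l : Fin n → Set (Fin n → F) | (∀ i, l i ∈ 𝔏) ∧ FormsJoint F l x}

/-- `𝔏` is generic: whenever `n` distinct lines of `𝔏` pass through a common point,
they form a joint there. -/
def Generic (F : Type*) [Field F] {n : ℕ} (𝔏 : Set (Set (Fin n → F))) : Prop :=
  ∀ (l : Fin n → Set (Fin n → F)) (x : Fin n → F), Function.Injective l →
    (∀ i, l i ∈ 𝔏) → (∀ i, x ∈ l i) → FormsJoint F l x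

attribute [local instance] Classical.propDecidable

variable {F : Type*} [Field F] {n : ℕ}

/-- Any two parametrisations of the same "line set" have proportional directions. -/
theorem direction_ratio {v b v' b' : Fin n → F}
    (h : {x : Fin n → F | ∃ t : F, x = v + t • b} = {x | ∃ t : F, x = v' + t • b'}) :
    ∃ s : F, b' = s • b := by
  have h0 : v' ∈ {x : Fin n → F | ∃ t : F, x = v + t • b} := by
    rw [h]; exact ⟨0, by simp⟩
  have h1 : v' + b' ∈ {x : Fin n → F | ∃ t : F, x = v + t • b} := by
    rw [h]; exact ⟨1, by simp⟩
  obtain ⟨t0, ht0⟩ := h0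
  obtain ⟨t1, ht1⟩ := h1
  refine ⟨t1 - t0, ?_⟩
  have : v' + b' - v' = (v + t1 • b) - (v + t0 • b) := by rw [← ht0, ← ht1]
  simpa [add_sub_cancel_left, sub_smul] using this

/-- A set of `n` vectors two of which are proportional cannot span `F^n` (for `n ≥ 2`). -/
theorem not_span_of_proportional (b : Fin n → Fin n → F) {i j : Fin n} (hij : i ≠ j)
    {s : F} (hprop : b i = s • b j) (hn : 2 ≤ n) :
    Submodule.span F (Set.range b) ≠ ⊤ := by
  intro htop
  have hsub : Set.range b ⊆ ↑(Submodule.span F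
      ((Finset.image b (Finset.univ.erase i) : Finset (Fin n → F)) : Set (Fin n → F))) := by
    rintro _ ⟨m, rfl⟩
    by_cases hm : m = i
    · subst hm
      rw [hprop]
      exact Submodule.smul_mem _ _ (Submodule.subset_span (Finset.mem_coe.mpr
        (Finset.mem_image_of_mem b (Finset.mem_erase.mpr ⟨hij.symm, Finset.mem_univ j⟩))))
    · exact Submodule.subset_span (Finset.mem_coe.mpr
        (Finset.mem_image_of_mem b (Finset.mem_erase.mpr ⟨hm, Finset.mem_univ m⟩)))
  have hle : Submodule.span F (Set.range b) ≤ Submodule.span F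
      ((Finset.image b (Finset.univ.erase i) : Finset (Fin n → F)) : Set (Fin n → F)) :=
    Submodule.span_le.mpr hsub
  rw [htop] at hle
  have htop2 : Submodule.span F
      ((Finset.image b (Finset.univ.erase i) : Finset (Fin n → F)) : Set (Fin n → F)) = ⊤ :=
    top_le_iff.mp hle
  have hrank := finrank_span_finset_le_card (R := F)
      (Finset.image b (Finset.univ.erase i))
  rw [Set.finrank, htop2] at hrank
  have h1 : Module.finrank F (Fin n → F) = n := by simp
  rw [finrank_top, h1] at hrank
  have h2 : (Finset.image b (Finset.univ.erase i)).card ≤ n - 1 := by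
    calc (Finset.image b (Finset.univ.erase i)).card ≤ (Finset.univ.erase i).card :=
          Finset.card_image_le
    _ = n - 1 := by simp
  omega

/-- the tuple of lines in a joint is injective. -/
theorem formsJoint_injective {l : Fin n → Set (Fin n → F)} {x : Fin n → F}
    (h : FormsJoint F l x) (hn : 2 ≤ n) : Function.Injective l := by
  obtain ⟨-, b, hdir, hspan⟩ := h
  intro i j hij
  by_contra hne
  obtain ⟨hbi, v, hv⟩ := hdir i
  obtain ⟨hbj, v', hv'⟩ := hdir j
  rw [hij, hv'] at hv
  obtain ⟨s, hs⟩ := direction_ratio hv.symm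
  exact not_span_of_proportional b (Ne.symm hne) hs hn hspan

/-- Two distinct lines meet in at most one point. -/
theorem line_inter_subsingleton {l m : Set (Fin n → F)} (hl : IsLine F l) (hm : IsLine F m)
    (hlm : l ≠ m) : Set.Subsingleton (l ∩ m) := by
  intro x hx y hy
  by_contra hxy
  apply hlm
  have key : ∀ l' : Set (Fin n → F), IsLine F l' → x ∈ l' → y ∈ l' →
      l' = {z : Fin n → F | ∃ s : F, z = x + s • (y - x)} := by
    rintro l' ⟨v, b, hb, rfl⟩ hxl hyl
    obtain ⟨t1, rfl⟩ := hxl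
    obtain ⟨t2, hy2⟩ := hyl
    have ht12 : t2 - t1 ≠ 0 := by
      intro hc
      apply hxy
      have : t2 = t1 := by linear_combination hc
      rw [hy2, this]
    have hyx : y - (v + t1 • b) = (t2 - t1) • b := by
      rw [hy2, sub_smul]; abel
    ext z
    constructor
    · rintro ⟨t, rfl⟩
      exact ⟨(t - t1) / (t2 - t1), by
        rw [hyx, smul_smul, div_mul_cancel₀ _ ht12, sub_smul]
        abel⟩
    · rintro ⟨s, rfl⟩
      exact ⟨t1 + s * (t2 - t1), by
        rw [hyx, smul_smul, add_smul]
        abel⟩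
  rw [key l hl hx.1 hy.1, key m hm hx.2 hy.2]


section poly
open MvPolynomial Polynomial
variable {K : Type*} [Field K] {n : ℕ}

/-- Restriction of a multivariate polynomial to the line `t ↦ v + t • b`. -/
noncomputable def lineComp (v b : Fin n → K) :
    MvPolynomial (Fin n) K →+* Polynomial K :=
  MvPolynomial.eval₂Hom Polynomial.C
    (fun i => Polynomial.C (v i) + Polynomial.C (b i) * Polynomial.X)

theorem lineComp_C (v b : Fin n → K) (a : K) :
    lineComp v b (MvPolynomial.C a) = Polynomial.C a := by
  simp [lineComp]

theorem lineComp_X (v b : Fin n → K) (i : Fin n) :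
    lineComp v b (MvPolynomial.X i) = Polynomial.C (v i) + Polynomial.C (b i) * Polynomial.X := by
  simp [lineComp]

theorem lineComp_eval (v b : Fin n → K) (t : K) (p : MvPolynomial (Fin n) K) :
    (lineComp v b p).eval t = MvPolynomial.eval (fun i => v i + t * b i) p := by
  induction p using MvPolynomial.induction_on with
  | C a => simp [lineComp_C]
  | add p q hp hq => simp [map_add, hp, hq]
  | mul_X p i hp =>
      rw [map_mul, Polynomial.eval_mul, lineComp_X, hp, MvPolynomial.eval_mul,
        MvPolynomial.eval_X]
      simp only [Polynomial.eval_add, Polynomial.eval_mul, Polynomial.eval_C, Polynomial.eval_X]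
      ring

theorem lineComp_natDegree_le (v b : Fin n → K) (p : MvPolynomial (Fin n) K) :
    (lineComp v b p).natDegree ≤ p.totalDegree := by
  conv_lhs => rw [p.as_sum]
  rw [map_sum]
  apply Polynomial.natDegree_sum_le_of_forall_le
  intro s hs
  have h1 : lineComp v b (MvPolynomial.monomial s (MvPolynomial.coeff s p)) =
      Polynomial.C (MvPolynomial.coeff s p) *
        s.prod (fun i e => (Polynomial.C (v i) + Polynomial.C (b i) * Polynomial.X) ^ e) := by
    simp [lineComp, MvPolynomial.eval₂Hom_monomial]
  rw [h1]
  refine le_trans (Polynomial.natDegree_mul_le) ?_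
  rw [Polynomial.natDegree_C, zero_add]
  refine le_trans (Polynomial.natDegree_prod_le _ _) ?_
  refine le_trans ?_ (MvPolynomial.le_totalDegree hs)
  rw [Finsupp.sum]
  apply Finset.sum_le_sum
  intro i hi
  refine le_trans (Polynomial.natDegree_pow_le) ?_
  have : (Polynomial.C (v i) + Polynomial.C (b i) * Polynomial.X).natDegree ≤ 1 := by
    refine le_trans (Polynomial.natDegree_add_le _ _) ?_
    simp only [Polynomial.natDegree_C]
    refine max_le (by omega) ?_
    refine le_trans (Polynomial.natDegree_mul_le) ?_
    simp
  calc (s i) * _ ≤ s i * 1 := Nat.mul_le_mul_left _ this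
  _ = s i := by omega

theorem lineComp_coeff_zero (v b : Fin n → K) (p : MvPolynomial (Fin n) K) :
    (lineComp v b p).coeff 0 = MvPolynomial.eval v p := by
  rw [Polynomial.coeff_zero_eq_eval_zero, lineComp_eval]
  simp only [zero_mul, add_zero]

theorem lineComp_coeff_one (v b : Fin n → K) (p : MvPolynomial (Fin n) K) :
    (lineComp v b p).coeff 1 =
      ∑ i, b i * MvPolynomial.eval v (MvPolynomial.pderiv i p) := by
  induction p using MvPolynomial.induction_on with
  | C a => simp [lineComp_C]
  | add p q hp hq => simp [map_add, hp, hq, Finset.sum_add_distrib, mul_add]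
  | mul_X p j hp =>
      have rhs : ∀ i : Fin n, MvPolynomial.pderiv i (p * MvPolynomial.X j) =
          MvPolynomial.pderiv i p * MvPolynomial.X j + p * (if j = i then 1 else 0) := by
        intro i
        rw [MvPolynomial.pderiv_mul, MvPolynomial.pderiv_X, Pi.single_apply]
      rw [map_mul, lineComp_X]
      have expand : (lineComp v b p) * (Polynomial.C (v j) + Polynomial.C (b j) * Polynomial.X) =
          (lineComp v b p) * Polynomial.C (v j) +
          ((lineComp v b p) * Polynomial.C (b j)) * Polynomial.X := by ring
      rw [expand, Polynomial.coeff_add, Polynomial.coeff_mul_C, Polynomial.coeff_mul_X,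
        Polynomial.coeff_mul_C, hp, lineComp_coeff_zero]
      simp only [rhs, map_add, map_mul, MvPolynomial.eval_X, apply_ite (MvPolynomial.eval v),
        map_one, map_zero, mul_ite, mul_one, mul_zero, mul_add]
      rw [Finset.sum_add_distrib, Finset.sum_ite_eq]
      simp only [Finset.mem_univ, if_true, Finset.sum_mul]
      have hass : ∀ i : Fin n, b i * (MvPolynomial.eval v) (MvPolynomial.pderiv i p) * v j
           = b i * ((MvPolynomial.eval v) (MvPolynomial.pderiv i p) * v j) := fun i => by ring
      simp only [hass]
      ring

/-- Reparametrisation: restricting to the same line with base point `v + t0 • b` and direction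
`s • b` is composition with an affine map. -/
theorem lineComp_reparam (v b : Fin n → K) (t0 s : K) (p : MvPolynomial (Fin n) K) :
    lineComp (fun i => v i + t0 * b i) (fun i => s * b i) p =
      (lineComp v b p).comp (Polynomial.C t0 + Polynomial.C s * Polynomial.X) := by
  induction p using MvPolynomial.induction_on with
  | C a => simp [lineComp_C]
  | add p q hp hq => simp [map_add, hp, hq, Polynomial.add_comp]
  | mul_X p j hp =>
      rw [map_mul, map_mul, lineComp_X, lineComp_X, Polynomial.mul_comp, hp]
      congr 1
      simp only [Polynomial.add_comp, Polynomial.mul_comp, Polynomial.C_comp, Polynomial.X_comp,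
        map_add, map_mul]
      ring

theorem coeff_pderiv' (p : MvPolynomial (Fin n) K) (j : Fin n) (β : Fin n →₀ ℕ) :
    MvPolynomial.coeff β (MvPolynomial.pderiv j p) =
      ((β j + 1 : ℕ) : K) * MvPolynomial.coeff (β + Finsupp.single j 1) p := by
  induction p using MvPolynomial.induction_on' with
  | add p q hp hq => simp [map_add, hp, hq, mul_add]
  | monomial s a =>
      rw [MvPolynomial.pderiv_monomial]
      rw [MvPolynomial.coeff_monomial, MvPolynomial.coeff_monomial]
      by_cases hs : s = β + Finsupp.single j 1
      · have h1 : s - Finsupp.single j 1 = β := by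
          rw [hs]; exact add_tsub_cancel_right _ _
        rw [if_pos h1, if_pos hs, hs]
        have : ((β + Finsupp.single j 1 : Fin n →₀ ℕ)) j = β j + 1 := by simp
        rw [this]
        ring
      · rw [if_neg hs, mul_zero]
        by_cases h2 : s - Finsupp.single j 1 = β
        · rw [if_pos h2]
          have hsj : s j = 0 := by
            by_contra hsj
            apply hs
            have : s = (s - Finsupp.single j 1) + Finsupp.single j 1 := by
              ext m
              by_cases hm : m = j
              · subst hm
                simp only [Finsupp.add_apply, Finsupp.tsub_apply, Finsupp.single_eq_same]
                omega
              · simp [Finsupp.single_apply, Ne.symm hm, hm]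
            rw [this, h2]
          rw [hsj]
          simp
        · rw [if_neg h2]

/-- A nonzero polynomial of degree `≤ d` cannot vanish at more than `d` points of a line. -/
theorem card_le_natDegree_of_roots {q : Polynomial K} (hq : q ≠ 0) {T : Finset K}
    (h : ∀ t ∈ T, q.eval t = 0) : T.card ≤ q.natDegree := by
  classical
  have hsub : T ⊆ q.roots.toFinset := by
    intro t ht
    rw [Multiset.mem_toFinset]
    exact (Polynomial.mem_roots hq).mpr (h t ht)
  calc T.card ≤ q.roots.toFinset.card := Finset.card_le_card hsub
  _ ≤ Multiset.card q.roots := Multiset.toFinset_card_le _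
  _ ≤ q.natDegree := Polynomial.card_roots' q

/-- Parameter counting: a nonzero polynomial of total degree `≤ n*k` vanishing on any
finite set of fewer than `(k+1)^n` points. -/
theorem exists_vanishing_poly (T : Finset (Fin n → K)) (k : ℕ) (hT : T.card < (k + 1) ^ n) :
    ∃ p : MvPolynomial (Fin n) K, p ≠ 0 ∧ p.totalDegree ≤ n * k ∧
      ∀ x ∈ T, MvPolynomial.eval x p = 0 := by
  classical
  -- the evaluation linear map from coefficient vectors to values on T
  set E := (Fin n → Fin (k + 1)) with hE
  let mk : E → (Fin n →₀ ℕ) := fun α => Finsupp.equivFunOnFinite.symm (fun i => (α i : ℕ))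
  have hmk_apply : ∀ (α : E) (i : Fin n), mk α i = (α i : ℕ) := fun α i => rfl
  have hmk_inj : Function.Injective mk := by
    intro α α' h
    funext i
    have := congrArg (fun f => (f : (Fin n) →₀ ℕ) i) h
    simp only [hmk_apply] at this
    exact Fin.ext this
  let Φ : (E → K) →ₗ[K] (T → K) :=
    { toFun := fun c x => ∑ α : E, c α * ∏ i, (x : Fin n → K) i ^ (α i : ℕ)
      map_add' := by
        intro c c'
        funext x
        simp only [Pi.add_apply, add_mul, Finset.sum_add_distrib]
      map_smul' := by
        intro m c
        funext x
        simp only [Pi.smul_apply, smul_eq_mul, RingHom.id_apply, Finset.mul_sum, mul_assoc] }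
  have hnotinj : ¬ Function.Injective Φ := by
    intro hinj
    have h1 := LinearMap.finrank_le_finrank_of_injective hinj
    rw [Module.finrank_pi K, Module.finrank_pi K] at h1
    simp only [Fintype.card_coe, Fintype.card_fun, Fintype.card_fin] at h1
    have hcardE : Fintype.card E = (k + 1) ^ n := by
      show Fintype.card (Fin n → Fin (k + 1)) = (k + 1) ^ n
      simp
    omega
  have hker : ∃ c : E → K, c ≠ 0 ∧ Φ c = 0 := by
    by_contra hc
    push_neg at hc
    apply hnotinj
    rw [← LinearMap.ker_eq_bot, Submodule.eq_bot_iff]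
    intro c hmem
    by_contra hne
    exact (hc c hne) hmem
  obtain ⟨c, hc0, hc⟩ := hker
  refine ⟨∑ α : E, MvPolynomial.monomial (mk α) (c α), ?_, ?_, ?_⟩
  · -- nonzero
    obtain ⟨α₀, hα₀⟩ : ∃ α₀, c α₀ ≠ 0 := by
      by_contra hall
      push_neg at hall
      exact hc0 (funext hall)
    intro hzero
    apply hα₀
    have := congrArg (MvPolynomial.coeff (mk α₀)) hzero
    rw [MvPolynomial.coeff_sum] at this
    rw [Finset.sum_eq_single α₀] at this
    · simpa [MvPolynomial.coeff_monomial] using this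
    · intro α _ hαne
      rw [MvPolynomial.coeff_monomial, if_neg]
      intro h
      exact hαne (hmk_inj h)
    · simp
  · -- total degree
    refine le_trans (MvPolynomial.totalDegree_finset_sum _ _) ?_
    apply Finset.sup_le
    intro α _
    refine le_trans (MvPolynomial.totalDegree_monomial_le _ _) ?_
    rw [Finsupp.sum_fintype]
    · have hle : ∀ i ∈ Finset.univ, id ((mk α) i) ≤ k := by
        intro i _
        show (mk α) i ≤ k
        rw [hmk_apply]
        omega
      refine le_trans (Finset.sum_le_sum hle) ?_
      simp [mul_comm]
    · intro i; rfl
  · -- vanishing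
    intro x hx
    have := congrFun (congrArg (fun f => (f : T → K)) hc) ⟨x, hx⟩
    simp only [Pi.zero_apply] at this
    rw [map_sum]
    rw [← this]
    apply Finset.sum_congr rfl
    intro α _
    rw [MvPolynomial.eval_monomial]
    congr 1
    rw [Finsupp.prod_fintype]
    · rfl
    · intro i; exact pow_zero _

theorem totalDegree_pderiv_lt' {p : MvPolynomial (Fin n) K} {j : Fin n}
    (hne : MvPolynomial.pderiv j p ≠ 0) :
    (MvPolynomial.pderiv j p).totalDegree < p.totalDegree := by
  have key : ∀ β ∈ (MvPolynomial.pderiv j p).support,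
      β.sum (fun _ e => e) + 1 ≤ p.totalDegree := by
    intro β hβ
    rw [MvPolynomial.mem_support_iff, coeff_pderiv'] at hβ
    have hc : MvPolynomial.coeff (β + Finsupp.single j 1) p ≠ 0 := by
      intro h; exact hβ (by rw [h, mul_zero])
    have hmem : (β + Finsupp.single j 1) ∈ p.support := MvPolynomial.mem_support_iff.mpr hc
    have hsum : (β + Finsupp.single j 1).sum (fun _ e => e) = β.sum (fun _ e => e) + 1 := by
      rw [Finsupp.sum_add_index' (fun _ => rfl) (fun _ _ _ => rfl)]
      rw [Finsupp.sum_single_index rfl]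
    rw [← hsum]
    exact MvPolynomial.le_totalDegree hmem
  obtain ⟨β₀, hβ₀⟩ := (MvPolynomial.support_nonempty.mpr hne)
  have hpos : 0 < p.totalDegree := by
    have := key β₀ hβ₀; omega
  rw [MvPolynomial.totalDegree]
  rw [Finset.sup_lt_iff (by exact hpos)]
  intro β hβ
  have := key β hβ
  omega

theorem exists_smaller_of_pderiv_zero [IsAlgClosed K] {p : MvPolynomial (Fin n) K} (hp : p ≠ 0)
    (hdeg : p.totalDegree ≠ 0) (hd : ∀ j, MvPolynomial.pderiv j p = 0) :
    ∃ h : MvPolynomial (Fin n) K, h ≠ 0 ∧ h.totalDegree < p.totalDegree ∧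
      ∀ z : Fin n → K, MvPolynomial.eval z p = 0 → MvPolynomial.eval z h = 0 := by
  classical
  have hkey : ∀ (α : Fin n →₀ ℕ) (j : Fin n), 1 ≤ α j →
      ((α j : ℕ) : K) * MvPolynomial.coeff α p = 0 := by
    intro α j hαj
    have hsplit : α = (α - Finsupp.single j 1) + Finsupp.single j 1 := by
      ext m
      by_cases hm : m = j
      · subst hm
        simp only [Finsupp.add_apply, Finsupp.tsub_apply, Finsupp.single_eq_same]
        omega
      · simp [Finsupp.single_apply, Ne.symm hm, hm]
    have := coeff_pderiv' p j (α - Finsupp.single j 1)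
    rw [hd j] at this
    simp only [MvPolynomial.coeff_zero] at this
    have hj1 : ((α - Finsupp.single j 1 : Fin n →₀ ℕ)) j + 1 = α j := by
      simp only [Finsupp.tsub_apply, Finsupp.single_eq_same]
      omega
    rw [hj1, ← hsplit] at this
    exact this.symm
  rcases CharP.char_is_prime_or_zero K (ringChar K) with hq | hq0
  · -- positive characteristic q
    set q := ringChar K with hqdef
    haveI : CharP K q := ringChar.charP K
    haveI := Fact.mk hq
    have hq2 : 2 ≤ q := hq.two_le
    have hdvd : ∀ α ∈ p.support, ∀ j, q ∣ α j := by
      intro α hα j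
      rcases Nat.eq_zero_or_pos (α j) with h0 | h1
      · simp [h0]
      · have := hkey α j h1
        rcases mul_eq_zero.mp this with hc | hc
        · exact (CharP.cast_eq_zero_iff K q (α j)).mp hc
        · exact absurd hc (MvPolynomial.mem_support_iff.mp hα)
    set mp : (Fin n →₀ ℕ) → (Fin n →₀ ℕ) := fun α => Finsupp.mapRange (· / q) (Nat.zero_div q) α
      with hmp
    have hmp_apply : ∀ (α : Fin n →₀ ℕ) (i : Fin n), mp α i = α i / q := by
      intro α i; simp [hmp, Finsupp.mapRange_apply]
    have hmp_inj : ∀ α ∈ p.support, ∀ α' ∈ p.support, mp α = mp α' → α = α' := by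
      intro α hα α' hα' h
      ext i
      have h1 : α i / q = α' i / q := by
        rw [← hmp_apply, ← hmp_apply, h]
      have h2 := Nat.div_mul_cancel (hdvd α hα i)
      have h3 := Nat.div_mul_cancel (hdvd α' hα' i)
      rw [← h2, ← h3, h1]
    -- q-th roots of the coefficients
    have hroot : ∀ α : Fin n →₀ ℕ, ∃ r : K, r ^ q = MvPolynomial.coeff α p :=
      fun α => IsAlgClosed.exists_pow_nat_eq _ hq.pos
    choose r hr using hroot
    refine ⟨∑ α ∈ p.support, MvPolynomial.monomial (mp α) (r α), ?_, ?_, ?_⟩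
    · -- nonzero
      obtain ⟨α₀, hα₀⟩ := MvPolynomial.support_nonempty.mpr hp
      intro hzero
      have := congrArg (MvPolynomial.coeff (mp α₀)) hzero
      rw [MvPolynomial.coeff_sum, Finset.sum_eq_single α₀] at this
      · rw [MvPolynomial.coeff_monomial, if_pos rfl, MvPolynomial.coeff_zero] at this
        have : r α₀ ^ q = 0 := by rw [this]; exact zero_pow hq.pos.ne'
        rw [hr α₀] at this
        exact MvPolynomial.mem_support_iff.mp hα₀ this
      · intro α hα hαne
        rw [MvPolynomial.coeff_monomial, if_neg]
        intro h
        exact hαne (hmp_inj α hα α₀ hα₀ h)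
      · intro h; exact absurd hα₀ h
    · -- smaller degree
      have hD : 0 < p.totalDegree := Nat.pos_of_ne_zero hdeg
      refine lt_of_le_of_lt (MvPolynomial.totalDegree_finset_sum _ _) ?_
      rw [Finset.sup_lt_iff (by exact hD)]
      intro α hα
      refine lt_of_le_of_lt (MvPolynomial.totalDegree_monomial_le _ _) ?_
      show (mp α).sum (fun _ e => e) < p.totalDegree
      have hqs : q * (mp α).sum (fun _ e => e) = α.sum (fun _ e => e) := by
        rw [Finsupp.sum_fintype _ _ (fun _ => rfl), Finsupp.sum_fintype _ _ (fun _ => rfl),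
          Finset.mul_sum]
        apply Finset.sum_congr rfl
        intro i _
        rw [hmp_apply]
        exact Nat.mul_div_cancel' (hdvd α hα i)
      have hαsum : α.sum (fun _ e => e) ≤ p.totalDegree := MvPolynomial.le_totalDegree hα
      set s := (mp α).sum (fun _ e => e)
      have h2s : 2 * s ≤ q * s := Nat.mul_le_mul_right s hq2
      omega
    · -- vanishing
      intro z hz
      have heval : MvPolynomial.eval z (∑ α ∈ p.support, MvPolynomial.monomial (mp α) (r α)) =
          ∑ α ∈ p.support, r α * ∏ i, z i ^ (mp α i) := by
        rw [map_sum]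
        apply Finset.sum_congr rfl
        intro α _
        rw [MvPolynomial.eval_monomial]
        congr 1
        rw [Finsupp.prod_fintype]
        intro i; exact pow_zero _
      have hpow : (∑ α ∈ p.support, r α * ∏ i, z i ^ (mp α i)) ^ q = MvPolynomial.eval z p := by
        rw [sum_pow_char]
        rw [MvPolynomial.eval_eq']
        apply Finset.sum_congr rfl
        intro α hα
        rw [mul_pow, hr α, ← Finset.prod_pow]
        congr 1
        apply Finset.prod_congr rfl
        intro i _
        rw [← pow_mul, hmp_apply, Nat.div_mul_cancel (hdvd α hα i)]
      rw [heval]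
      have : (∑ α ∈ p.support, r α * ∏ i, z i ^ (mp α i)) ^ q = 0 := by rw [hpow, hz]
      exact (pow_eq_zero_iff hq.pos.ne').mp this
  · -- characteristic zero: impossible
    exfalso
    haveI : CharP K 0 := by rw [← hq0]; exact ringChar.charP K
    haveI : CharZero K := CharP.charP_to_charZero K
    apply hdeg
    rw [MvPolynomial.totalDegree_eq_zero_iff]
    intro α hα j
    by_contra hne
    have h1 : 1 ≤ α j := by omega
    have := hkey α j h1
    rcases mul_eq_zero.mp this with hc | hc
    · have : α j = 0 := by exact_mod_cast hc
      omega
    · exact (MvPolynomial.mem_support_iff.mp hα) hc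

end poly

/-- `N(x) ≤ d(x)^n` where `d(x)` is the number of lines of `𝔏` through `x`. -/
theorem jointMult_le (𝔏 : Finset (Set (Fin n → F))) (x : Fin n → F) :
    jointMult F (↑𝔏) x ≤ (𝔏.filter (fun l => x ∈ l)).card ^ n := by
  have hsub : {l : Fin n → Set (Fin n → F) | (∀ i, l i ∈ (↑𝔏 : Set _)) ∧ FormsJoint F l x} ⊆
      ↑(Fintype.piFinset fun _ : Fin n => 𝔏.filter (fun l => x ∈ l)) := by
    rintro l ⟨hmem, hx, -⟩
    simp only [Finset.coe_sort_coe, Finset.mem_coe, Fintype.mem_piFinset, Finset.mem_filter]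
    exact fun i => ⟨hmem i, hx i⟩
  calc jointMult F (↑𝔏) x ≤
      (↑(Fintype.piFinset fun _ : Fin n => 𝔏.filter (fun l => x ∈ l)) : Set _).ncard :=
        Set.ncard_le_ncard hsub (Set.finite_coe_iff.mp (by exact Finset.finite_toSet _))
    _ = (Fintype.piFinset fun _ : Fin n => 𝔏.filter (fun l => x ∈ l)).card :=
        Set.ncard_coe_finset _
    _ = (𝔏.filter (fun l => x ∈ l)).card ^ n := by
        rw [Fintype.card_piFinset]; simp

/-- If `N(x) ≥ 1` then `x` lies on at least `n` lines of `𝔏`. -/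
theorem card_filter_ge (𝔏 : Finset (Set (Fin n → F))) (x : Fin n → F) (hn : 2 ≤ n)
    (h : 1 ≤ jointMult F (↑𝔏) x) :
    n ≤ (𝔏.filter (fun l => x ∈ l)).card := by
  have hne : {l : Fin n → Set (Fin n → F) | (∀ i, l i ∈ (↑𝔏 : Set _)) ∧
      FormsJoint F l x}.Nonempty := by
    apply Set.nonempty_of_ncard_ne_zero
    show jointMult F (↑𝔏) x ≠ 0
    omega
  obtain ⟨l, hmem, hjoint⟩ := hne
  have hinj := formsJoint_injective hjoint hn
  have hcard : (Finset.univ.image l).card = n := by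
    rw [Finset.card_image_of_injective _ hinj]; simp
  have hle : (Finset.univ.image l).card ≤ (𝔏.filter (fun l => x ∈ l)).card := by
    apply Finset.card_le_card
    intro m hm
    simp only [Finset.mem_image] at hm
    obtain ⟨i, -, rfl⟩ := hm
    exact Finset.mem_filter.mpr ⟨hmem i, hjoint.1 i⟩
  omega


/-- If `N(x) ≥ 1` then `x` is on two distinct lines of `𝔏`. -/
theorem two_lines (𝔏 : Finset (Set (Fin n → F))) (x : Fin n → F) (hn : 2 ≤ n)
    (h : 1 ≤ jointMult F (↑𝔏) x) :
    ∃ l₁ ∈ 𝔏, ∃ l₂ ∈ 𝔏, l₁ ≠ l₂ ∧ x ∈ l₁ ∧ x ∈ l₂ := by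
  have hne : {l : Fin n → Set (Fin n → F) | (∀ i, l i ∈ (↑𝔏 : Set _)) ∧
      FormsJoint F l x}.Nonempty := by
    apply Set.nonempty_of_ncard_ne_zero
    show jointMult F (↑𝔏) x ≠ 0
    omega
  obtain ⟨l, hmem, hjoint⟩ := hne
  have hinj := formsJoint_injective hjoint hn
  have h01 : (⟨0, by omega⟩ : Fin n) ≠ (⟨1, by omega⟩ : Fin n) := by
    simp [Fin.ext_iff]
  exact ⟨l ⟨0, by omega⟩, hmem _, l ⟨1, by omega⟩, hmem _, fun hc => h01 (hinj hc),
    hjoint.1 _, hjoint.1 _⟩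

/-- The joint set is finite. -/
theorem joints_finite (𝔏 : Finset (Set (Fin n → F))) (hL : ∀ l ∈ 𝔏, IsLine F l) (hn : 2 ≤ n)
    (lam : ℝ) (hlam : 1 ≤ lam) :
    {x : Fin n → F | lam ≤ (jointMult F (↑𝔏) x : ℝ)}.Finite := by
  apply Set.Finite.subset (s := ⋃ l₁ ∈ 𝔏, ⋃ l₂ ∈ 𝔏, if l₁ = l₂ then ∅ else (l₁ ∩ l₂))
  · apply Set.Finite.biUnion (Finset.finite_toSet 𝔏)
    intro l₁ h₁
    apply Set.Finite.biUnion (Finset.finite_toSet 𝔏)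
    intro l₂ h₂
    by_cases hc : l₁ = l₂
    · simp [hc]
    · simp only [if_neg hc]
      exact Set.Subsingleton.finite (line_inter_subsingleton (hL _ h₁) (hL _ h₂) hc)
  · intro x hx
    simp only [Set.mem_setOf_eq] at hx
    have h1 : 1 ≤ jointMult F (↑𝔏) x := by
      have : (1 : ℝ) ≤ (jointMult F (↑𝔏) x : ℝ) := le_trans hlam hx
      exact_mod_cast this
    obtain ⟨l₁, hl₁, l₂, hl₂, hne, hx₁, hx₂⟩ := two_lines 𝔏 x hn h1
    simp only [Set.mem_iUnion]
    exact ⟨l₁, hl₁, l₂, hl₂, by simp [if_neg hne, hx₁, hx₂]⟩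


section part4

variable {F : Type*} [Field F] {n : ℕ} {K : Type*} [Field K] (ι : F →+* K)

/-- `p` vanishes identically (as a polynomial) on the line `l`. -/
def Vanish (p : MvPolynomial (Fin n) K) (l : Set (Fin n → F)) : Prop :=
  ∃ v b : Fin n → F, l = {x | ∃ t : F, x = v + t • b} ∧
    lineComp (fun i => ι (v i)) (fun i => ι (b i)) p = 0

theorem vanish_transfer {p : MvPolynomial (Fin n) K} {l : Set (Fin n → F)}
    (hv : Vanish ι p l) {v b : Fin n → F} (hl : l = {x | ∃ t : F, x = v + t • b}) :
    lineComp (fun i => ι (v i)) (fun i => ι (b i)) p = 0 := by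
  obtain ⟨v₀, b₀, hl₀, h0⟩ := hv
  have hvmem : v ∈ l := by rw [hl]; exact ⟨0, by simp⟩
  rw [hl₀] at hvmem
  obtain ⟨t₀, ht₀⟩ := hvmem
  obtain ⟨s, hs⟩ := direction_ratio (hl₀.symm.trans hl)
  have hveq : (fun i => ι (v i)) = fun i => ι (v₀ i) + ι t₀ * ι (b₀ i) := by
    funext i
    rw [← map_mul, ← map_add]
    congr 1
    rw [ht₀]
    simp
  have hbeq : (fun i => ι (b i)) = fun i => ι s * ι (b₀ i) := by
    funext i
    rw [← map_mul]
    congr 1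
    rw [hs]
    simp
  rw [hveq, hbeq, lineComp_reparam, h0]
  exact Polynomial.zero_comp

theorem vanish_at_point {p : MvPolynomial (Fin n) K} {l : Set (Fin n → F)}
    (hv : Vanish ι p l) {x : Fin n → F} (hx : x ∈ l) {b : Fin n → F}
    (hb : IsDirection F b l) :
    lineComp (fun i => ι (x i)) (fun i => ι (b i)) p = 0 := by
  obtain ⟨-, v', hl'⟩ := hb
  have h0 := vanish_transfer ι hv hl'
  rw [hl'] at hx
  obtain ⟨t₀, ht₀⟩ := hx
  have hveq : (fun i => ι (x i)) = fun i => ι (v' i) + ι t₀ * ι (b i) := by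
    funext i
    rw [← map_mul, ← map_add]
    congr 1
    rw [ht₀]
    simp
  have hbeq : (fun i => ι (b i)) = fun i => (1 : K) * ι (b i) := by
    funext i
    rw [one_mul]
  rw [hveq]
  conv_lhs => rw [hbeq]
  rw [lineComp_reparam, h0]
  exact Polynomial.zero_comp

/-- A linear functional over `F` vanishing on a spanning family vanishes. -/
theorem span_functional_zero (g : Fin n → K) (b : Fin n → Fin n → F)
    (hspan : Submodule.span F (Set.range b) = ⊤)
    (h : ∀ i, ∑ j, ι (b i j) * g j = 0) : ∀ j, g j = 0 := by
  letI : Algebra F K := ι.toAlgebra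
  have halg : ∀ c : F, algebraMap F K c = ι c := fun c => rfl
  let L : (Fin n → F) →ₗ[F] K :=
    { toFun := fun v => ∑ j, ι (v j) * g j
      map_add' := by
        intro u v
        simp only [Pi.add_apply, map_add, add_mul, Finset.sum_add_distrib]
      map_smul' := by
        intro c v
        simp only [Pi.smul_apply, smul_eq_mul, map_mul, RingHom.id_apply]
        rw [Algebra.smul_def, halg, Finset.mul_sum]
        apply Finset.sum_congr rfl
        intro j _
        ring }
  have hker : Set.range b ⊆ ↑(LinearMap.ker L) := by
    rintro - ⟨i, rfl⟩
    exact h i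
  have hle : Submodule.span F (Set.range b) ≤ LinearMap.ker L := Submodule.span_le.mpr hker
  rw [hspan] at hle
  have hL0 : ∀ v, L v = 0 := by
    intro v
    exact hle (Submodule.mem_top)
  intro j
  have := hL0 (Pi.single j 1)
  simp only [L, LinearMap.coe_mk, AddHom.coe_mk] at this
  rw [Finset.sum_eq_single j] at this
  · simpa using this
  · intro j' _ hj'
    rw [Pi.single_eq_of_ne hj', map_zero, zero_mul]
  · intro hj; exact absurd (Finset.mem_univ j) hj

end part4

section goodjoint

variable {F : Type*} [Field F] {n : ℕ} {K : Type*} [Field K] [IsAlgClosed K] (ι : F →+* K)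

theorem exists_good_joint (𝔏 : Finset (Set (Fin n → F)))
    (hgen : Generic F (↑𝔏 : Set (Set (Fin n → F)))) (hn : 2 ≤ n)
    (J' : Finset (Fin n → F)) (hJne : J'.Nonempty)
    {p : MvPolynomial (Fin n) K} (hp : p ≠ 0)
    (hvan : ∀ x ∈ J', MvPolynomial.eval (fun i => ι (x i)) p = 0)
    (hmin : ∀ p' : MvPolynomial (Fin n) K, p' ≠ 0 →
      (∀ x ∈ J', MvPolynomial.eval (fun i => ι (x i)) p' = 0) →
      p.totalDegree ≤ p'.totalDegree) :
    ∃ x ∈ J', ((𝔏.filter (fun l => x ∈ l)).filter (fun l => Vanish ι p l)).card ≤ n - 1 := by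
  by_contra hbad
  push_neg at hbad
  -- every joint has n distinct lines on which p vanishes; hence all partials vanish on J'
  have hstepA : ∀ x ∈ J', ∀ j, MvPolynomial.eval (fun i => ι (x i)) (MvPolynomial.pderiv j p)
      = 0 := by
    intro x hx
    have hVn : n ≤ ((𝔏.filter (fun l => x ∈ l)).filter (fun l => Vanish ι p l)).card := by
      have := hbad x hx
      omega
    obtain ⟨t, htsub, htcard⟩ := Finset.exists_subset_card_eq hVn
    have e : ↑t ≃ Fin n := Fintype.equivFinOfCardEq (by rw [Fintype.card_coe, htcard])
    set ll : Fin n → Set (Fin n → F) := fun i => ((e.symm i : ↑t) : Set (Fin n → F)) with hll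
    have hmemV : ∀ i, ll i ∈ (𝔏.filter (fun l => x ∈ l)).filter (fun l => Vanish ι p l) :=
      fun i => htsub (e.symm i).2
    have hinj : Function.Injective ll := by
      intro i j hij
      have := Subtype.coe_injective (a₁ := e.symm i) (a₂ := e.symm j) hij
      exact e.symm.injective this
    have hmem𝔏 : ∀ i, ll i ∈ (↑𝔏 : Set (Set (Fin n → F))) := by
      intro i
      have := hmemV i
      simp only [Finset.mem_filter] at this
      exact this.1.1
    have hmemx : ∀ i, x ∈ ll i := by
      intro i
      have := hmemV i
      simp only [Finset.mem_filter] at this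
      exact this.1.2
    have hjoint := hgen ll x hinj hmem𝔏 hmemx
    obtain ⟨-, b, hdir, hspan⟩ := hjoint
    have hcoeff : ∀ i, ∑ j, ι (b i j) *
        MvPolynomial.eval (fun m => ι (x m)) (MvPolynomial.pderiv j p) = 0 := by
      intro i
      have hvani : Vanish ι p (ll i) := by
        have := hmemV i
        simp only [Finset.mem_filter] at this
        exact this.2
      have h0 := vanish_at_point ι hvani (hmemx i) (hdir i)
      have := congrArg (fun q => Polynomial.coeff q 1) h0
      simp only [Polynomial.coeff_zero] at this
      rw [lineComp_coeff_one] at this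
      exact this
    exact span_functional_zero ι _ b hspan hcoeff
  -- all partial derivatives are identically zero
  have hpderiv : ∀ j, MvPolynomial.pderiv j p = 0 := by
    intro j
    by_contra hne
    have hvan' : ∀ x ∈ J', MvPolynomial.eval (fun i => ι (x i))
        (MvPolynomial.pderiv j p) = 0 := fun x hx => hstepA x hx j
    have := hmin _ hne hvan'
    have hlt := totalDegree_pderiv_lt' hne
    omega
  -- p is not a nonzero constant
  have hdeg : p.totalDegree ≠ 0 := by
    intro h0
    have hsupp : p.support ⊆ {0} := by
      intro m hm
      rw [Finset.mem_singleton]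
      ext j
      exact (MvPolynomial.totalDegree_eq_zero_iff _ p).mp h0 m hm j
    have hsupp' : p.support = {0} := by
      rcases Finset.subset_singleton_iff.mp hsupp with h | h
      · exact absurd (MvPolynomial.support_eq_empty.mp h) hp
      · exact h
    obtain ⟨x₀, hx₀⟩ := hJne
    have heval := hvan x₀ hx₀
    rw [MvPolynomial.eval_eq', hsupp', Finset.sum_singleton] at heval
    simp only [Finsupp.coe_zero, Pi.zero_apply, pow_zero, Finset.prod_const_one,
      mul_one] at heval
    have : (0 : Fin n →₀ ℕ) ∈ p.support := by rw [hsupp']; exact Finset.mem_singleton_self 0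
    exact (MvPolynomial.mem_support_iff.mp this) heval
  obtain ⟨h, hh0, hhdeg, hhvan⟩ := exists_smaller_of_pderiv_zero hp hdeg hpderiv
  have := hmin h hh0 (fun x hx => hhvan _ (hvan x hx))
  omega

end goodjoint

section mainsel

variable {F : Type*} [Field F] {n : ℕ}

theorem main_selection {K : Type*} [Field K] [IsAlgClosed K] (ι : F →+* K)
    (𝔏 : Finset (Set (Fin n → F))) (hL : ∀ l ∈ 𝔏, IsLine F l)
    (hgen : Generic F (↑𝔏 : Set (Set (Fin n → F)))) (hn : 2 ≤ n) (k : ℕ) :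
    ∀ (m : ℕ) (J' : Finset (Fin n → F)), J'.card = m → J'.card < (k + 1) ^ n →
    ∃ S : (Fin n → F) → Finset (Set (Fin n → F)),
      (∀ x ∈ J', S x ⊆ 𝔏.filter (fun l => x ∈ l) ∧
        (𝔏.filter (fun l => x ∈ l)).card ≤ (S x).card + (n - 1)) ∧
      (∀ l ∈ 𝔏, (J'.filter (fun x => l ∈ S x)).card ≤ n * k) := by
  intro m
  induction m using Nat.strong_induction_on with
  | _ m IH =>
  intro J' hm hcardlt
  rcases Finset.eq_empty_or_nonempty J' with rfl | hJne
  · exact ⟨fun _ => ∅, fun x hx => absurd hx (Finset.notMem_empty x), fun l _ => by simp⟩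
  -- a minimal-degree nonzero polynomial vanishing on J'
  have hex : ∃ d : ℕ, ∃ p : MvPolynomial (Fin n) K, p ≠ 0 ∧
      (∀ x ∈ J', MvPolynomial.eval (fun i => ι (x i)) p = 0) ∧ p.totalDegree ≤ d := by
    obtain ⟨p, hp0, hpdeg, hpvan⟩ := exists_vanishing_poly
      (J'.image (fun x => fun i => ι (x i))) k
      (lt_of_le_of_lt Finset.card_image_le hcardlt)
    exact ⟨n * k, p, hp0, fun x hx => hpvan _ (Finset.mem_image_of_mem _ hx), hpdeg⟩
  set d₀ := Nat.find hex with hd₀def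
  obtain ⟨p, hp0, hpvan, hpdeg⟩ := Nat.find_spec hex
  have hd₀le : d₀ ≤ n * k := by
    apply Nat.find_min' hex
    obtain ⟨p', h1, h2, h3⟩ := (by
      obtain ⟨p', hp0', hpdeg', hpvan'⟩ := exists_vanishing_poly
        (J'.image (fun x => fun i => ι (x i))) k
        (lt_of_le_of_lt Finset.card_image_le hcardlt)
      exact ⟨p', hp0', fun x hx => hpvan' _ (Finset.mem_image_of_mem _ hx), hpdeg'⟩ :
        ∃ p' : MvPolynomial (Fin n) K, p' ≠ 0 ∧
        (∀ x ∈ J', MvPolynomial.eval (fun i => ι (x i)) p' = 0) ∧ p'.totalDegree ≤ n * k)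
    exact ⟨p', h1, h2, h3⟩
  have hmin : ∀ p' : MvPolynomial (Fin n) K, p' ≠ 0 →
      (∀ x ∈ J', MvPolynomial.eval (fun i => ι (x i)) p' = 0) →
      p.totalDegree ≤ p'.totalDegree := by
    intro p' hp0' hvan'
    have : d₀ ≤ p'.totalDegree := Nat.find_min' hex ⟨p', hp0', hvan', le_refl _⟩
    omega
  -- the good joint
  obtain ⟨x₀, hx₀J, hgood⟩ := exists_good_joint ι 𝔏 hgen hn J' hJne hp0 hpvan hmin
  -- lines through x₀ on which p does not vanish
  set S₀ := (𝔏.filter (fun l => x₀ ∈ l)).filter (fun l => ¬ Vanish ι p l) with hS₀def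
  -- any non-vanishing line contains at most n*k points of J'
  have hcount : ∀ l ∈ 𝔏, ¬ Vanish ι p l → (J'.filter (fun x => x ∈ l)).card ≤ n * k := by
    intro l hl hnv
    obtain ⟨v, b, hb, hparam⟩ := hL l hl
    set q := lineComp (fun i => ι (v i)) (fun i => ι (b i)) p with hqdef
    have hq0 : q ≠ 0 := fun h => hnv ⟨v, b, hparam, h⟩
    -- parameters of the points of J' on l
    have hparampt : ∀ x ∈ J'.filter (fun x => x ∈ l), ∃ t : F, x = v + t • b := by
      intro x hx
      have := (Finset.mem_filter.mp hx).2
      rw [hparam] at this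
      exact this
    choose tf htf using hparampt
    have hcard : (J'.filter (fun x => x ∈ l)).card =
        ((J'.filter (fun x => x ∈ l)).attach.image
          (fun x => ι (tf x.1 x.2))).card := by
      rw [Finset.card_image_of_injective]
      · rw [Finset.card_attach]
      · intro x y hxy
        apply Subtype.ext
        have h1 : tf x.1 x.2 = tf y.1 y.2 := ι.injective hxy
        rw [htf x.1 x.2, htf y.1 y.2, h1]
    rw [hcard]
    refine le_trans (card_le_natDegree_of_roots hq0 ?_) (le_trans
      (lineComp_natDegree_le _ _ _) (le_trans hpdeg hd₀le))
    intro tt htt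
    simp only [Finset.mem_image, Finset.mem_attach, true_and] at htt
    obtain ⟨⟨x, hx⟩, hteq⟩ := htt
    subst hteq
    rw [hqdef, lineComp_eval]
    have hxval : (fun i => ι (v i) + ι (tf x hx) * ι (b i)) = fun i => ι (x i) := by
      funext i
      rw [← map_mul, ← map_add]
      congr 1
      have hxi := congrFun (htf x hx) i
      simp only [Pi.add_apply, Pi.smul_apply, smul_eq_mul] at hxi
      exact hxi.symm
    rw [hxval]
    exact hpvan x (Finset.mem_filter.mp hx).1
  -- recurse on J' minus the good joint
  obtain ⟨S', hS'a, hS'b⟩ := IH (J'.erase x₀).card (by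
      rw [Finset.card_erase_of_mem hx₀J]
      have : 0 < J'.card := Finset.card_pos.mpr hJne
      omega) (J'.erase x₀) rfl
    (lt_of_le_of_lt (Finset.card_le_card (Finset.erase_subset _ _)) hcardlt)
  refine ⟨Function.update S' x₀ S₀, ?_, ?_⟩
  · -- selection property
    intro x hx
    by_cases hxx : x = x₀
    · subst hxx
      rw [Function.update_self]
      constructor
      · exact Finset.filter_subset _ _
      · have hsplit := Finset.card_filter_add_card_filter_not
          (s := 𝔏.filter (fun l => x ∈ l)) (p := fun l => Vanish ι p l)
        have hS₀card : (Finset.filter (fun a => ¬ Vanish ι p a)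
            (𝔏.filter (fun l => x ∈ l))).card = S₀.card := rfl
        omega
    · rw [Function.update_of_ne hxx]
      exact hS'a x (Finset.mem_erase.mpr ⟨hxx, hx⟩)
  · -- load property
    intro l hl
    by_cases hlS₀ : l ∈ S₀
    · -- all selectors of l lie on l, and l is non-vanishing
      have hnv : ¬ Vanish ι p l := (Finset.mem_filter.mp hlS₀).2
      refine le_trans (Finset.card_le_card ?_) (hcount l hl hnv)
      intro x hx
      obtain ⟨hxJ, hxsel⟩ := Finset.mem_filter.mp hx
      refine Finset.mem_filter.mpr ⟨hxJ, ?_⟩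
      by_cases hxx : x = x₀
      · subst hxx
        rw [Function.update_self] at hxsel
        have := (Finset.mem_filter.mp hlS₀).1
        exact (Finset.mem_filter.mp this).2
      · rw [Function.update_of_ne hxx] at hxsel
        have hxe : x ∈ J'.erase x₀ := Finset.mem_erase.mpr ⟨hxx, hxJ⟩
        have := (hS'a x hxe).1 hxsel
        exact (Finset.mem_filter.mp this).2
    · -- x₀ does not select l, so selectors are selectors from the smaller set
      refine le_trans (Finset.card_le_card ?_) (hS'b l hl)
      intro x hx
      obtain ⟨hxJ, hxsel⟩ := Finset.mem_filter.mp hx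
      by_cases hxx : x = x₀
      · subst hxx
        rw [Function.update_self] at hxsel
        exact absurd hxsel hlS₀
      · rw [Function.update_of_ne hxx] at hxsel
        exact Finset.mem_filter.mpr ⟨Finset.mem_erase.mpr ⟨hxx, hxJ⟩, hxsel⟩

end mainsel

theorem stmt11 (n : ℕ) (hn : 3 ≤ n) :
    ∃ c C : ℝ, 0 < c ∧ ∀ (F : Type) [Field F] (𝔏 : Finset (Set (Fin n → F))),
      (∀ l ∈ 𝔏, IsLine F l) → Generic F (↑𝔏 : Set (Set (Fin n → F))) →
      ∀ lam : ℝ, 1 ≤ lam →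
      ∃ S : (Fin n → F) → Finset (Set (Fin n → F)),
        (∀ x : Fin n → F, lam ≤ (jointMult F ↑𝔏 x : ℝ) →
          S x ⊆ 𝔏 ∧ (∀ l ∈ S x, x ∈ l) ∧ c * lam ^ (1 / (n : ℝ)) ≤ ((S x).card : ℝ)) ∧
        (∀ l ∈ 𝔏,
          (Set.ncard {x : Fin n → F | lam ≤ (jointMult F ↑𝔏 x : ℝ) ∧ l ∈ S x} : ℝ) ≤
            C * (Set.ncard {x : Fin n → F | lam ≤ (jointMult F ↑𝔏 x : ℝ)} : ℝ) ^
              (1 / (n : ℝ))) := by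
  have hn2 : 2 ≤ n := by omega
  have hnR : (3:ℝ) ≤ (n:ℝ) := by exact_mod_cast hn
  refine ⟨1 / (2 * n), n, by positivity, ?_⟩
  intro F _ 𝔏 hL hgen lam hlam
  classical
  have hfin := joints_finite 𝔏 hL hn2 lam hlam
  set JF := hfin.toFinset with hJFdef
  set M := JF.card with hMdef
  have hkex : ∃ k : ℕ, M < (k + 1) ^ n := ⟨M, by
    calc M < M + 1 := Nat.lt_succ_self M
    _ ≤ (M + 1) ^ n := Nat.le_self_pow (by omega) _⟩
  set k := Nat.find hkex with hkdef
  have hkM : M < (k + 1) ^ n := Nat.find_spec hkex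
  obtain ⟨S, hSa, hSb⟩ := main_selection (algebraMap F (AlgebraicClosure F)) 𝔏 hL hgen hn2 k
    M JF rfl hkM
  refine ⟨S, ?_, ?_⟩
  · -- selection property
    intro x hx
    have hxJF : x ∈ JF := by
      rw [hJFdef, Set.Finite.mem_toFinset]
      exact hx
    obtain ⟨hsub, hcard⟩ := hSa x hxJF
    refine ⟨hsub.trans (Finset.filter_subset _ _), ?_, ?_⟩
    · intro l hl
      exact (Finset.mem_filter.mp (hsub hl)).2
    · have h1N : 1 ≤ jointMult F ↑𝔏 x := by exact_mod_cast le_trans hlam hx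
      set dd := (𝔏.filter (fun l => x ∈ l)).card with hdd
      have hddn : n ≤ dd := card_filter_ge 𝔏 x hn2 h1N
      have hNd : jointMult F ↑𝔏 x ≤ dd ^ n := jointMult_le 𝔏 x
      have hlamdd : lam ≤ (dd:ℝ) ^ (n:ℕ) := by
        refine le_trans hx ?_
        exact_mod_cast Nat.cast_le.mpr hNd
      have hlam0 : (0:ℝ) ≤ lam := by linarith
      have hdd0 : (0:ℝ) ≤ (dd:ℝ) := Nat.cast_nonneg dd
      have hroot : lam ^ (1/(n:ℝ)) ≤ (dd:ℝ) := by
        have h1 : lam ^ (1/(n:ℝ)) ≤ ((dd:ℝ)^(n:ℕ)) ^ (1/(n:ℝ)) :=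
          Real.rpow_le_rpow hlam0 hlamdd (by positivity)
        rwa [← Real.rpow_natCast (dd:ℝ) n, ← Real.rpow_mul hdd0,
          mul_one_div, div_self (by positivity : (n:ℝ) ≠ 0), Real.rpow_one] at h1
      have hcastn1 : ((n - 1 : ℕ):ℝ) = (n:ℝ) - 1 := by
        rw [Nat.cast_sub (by omega)]; simp
      have hcardR : (dd:ℝ) ≤ ((S x).card : ℝ) + ((n:ℝ) - 1) := by
        calc (dd:ℝ) ≤ (((S x).card + (n-1) : ℕ) : ℝ) := by exact_mod_cast hcard
        _ = ((S x).card : ℝ) + ((n:ℝ) - 1) := by rw [Nat.cast_add, hcastn1]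
      have hSpos : 1 ≤ (S x).card := by omega
      by_cases hbig : lam ^ (1/(n:ℝ)) ≤ 2 * n
      · calc (1/(2*(n:ℝ))) * lam ^ (1/(n:ℝ)) ≤ (1/(2*(n:ℝ))) * (2*(n:ℝ)) :=
            mul_le_mul_of_nonneg_left hbig (by positivity)
        _ = 1 := by field_simp
        _ ≤ ((S x).card : ℝ) := by exact_mod_cast hSpos
      · push_neg at hbig
        set u := lam ^ (1/(n:ℝ)) with hu
        have hu0 : 0 ≤ u := Real.rpow_nonneg hlam0 _
        have hSc : u - ((n:ℝ) - 1) ≤ ((S x).card : ℝ) := by linarith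
        have hkey : (1/(2*(n:ℝ))) * u ≤ u - ((n:ℝ)-1) := by
          rw [div_mul_eq_mul_div, one_mul, div_le_iff₀ (by positivity)]
          nlinarith [mul_nonneg (by linarith : (0:ℝ) ≤ 2*(n:ℝ)-1) (by linarith : (0:ℝ) ≤ u - 2*(n:ℝ))]
        linarith
  · -- load property
    intro l hl
    have hset1 : {x : Fin n → F | lam ≤ (jointMult F ↑𝔏 x : ℝ) ∧ l ∈ S x} =
        ↑(JF.filter (fun x => l ∈ S x)) := by
      ext x
      simp only [Set.mem_setOf_eq, Finset.coe_filter, hJFdef, Set.Finite.mem_toFinset,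
        Set.mem_setOf_eq]
    have hset2 : {x : Fin n → F | lam ≤ (jointMult F ↑𝔏 x : ℝ)} = ↑JF := by
      ext x
      rw [hJFdef, Finset.mem_coe, Set.Finite.mem_toFinset]
    rw [hset1, hset2, Set.ncard_coe_finset, Set.ncard_coe_finset]
    have hload : (JF.filter (fun x => l ∈ S x)).card ≤ n * k := hSb l hl
    have hkR : (k:ℝ) ≤ (M:ℝ) ^ (1/(n:ℝ)) := by
      rcases Nat.eq_zero_or_pos k with hk0 | hkpos
      · rw [hk0]
        simpa using Real.rpow_nonneg (Nat.cast_nonneg M) _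
      · have hkn : k ^ n ≤ M := by
          have h := Nat.find_min hkex (show k - 1 < k by omega)
          push_neg at h
          have : (k - 1 + 1) = k := by omega
          rwa [this] at h
        have hknR : ((k:ℝ))^(n:ℕ) ≤ (M:ℝ) := by exact_mod_cast hkn
        calc (k:ℝ) = (((k:ℝ))^(n:ℕ))^(1/(n:ℝ)) := by
              rw [← Real.rpow_natCast (k:ℝ) n, ← Real.rpow_mul (Nat.cast_nonneg k),
                mul_one_div, div_self (by positivity : (n:ℝ) ≠ 0), Real.rpow_one]
        _ ≤ (M:ℝ)^(1/(n:ℝ)) := Real.rpow_le_rpow (by positivity) hknR (by positivity)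
    calc ((JF.filter (fun x => l ∈ S x)).card : ℝ) ≤ ((n*k : ℕ):ℝ) := by exact_mod_cast hload
    _ = (n:ℝ) * (k:ℝ) := by push_cast; ring
    _ ≤ (n:ℝ) * (M:ℝ)^(1/(n:ℝ)) := mul_le_mul_of_nonneg_left hkR (by positivity)
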